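/- Inverse explicit expression: for every nonnegative integer k and real x, x^k = (k!/2^k)·∑_{m=0}^{⌊k/2⌋} 1/(m!·(k−2m)!)·H_{k−2m}(x). -/
import Mathlib


open Real MeasureTheory

/-- The physicists' Hermite polynomials: `H 0 = 1`, `H (k+1) = 2·X·H k − (H k)'`. -/
noncomputable def hermiteP : ℕ → Polynomial ℝ
  | 0 => 1
  | n + 1 => 2 * (Polynomial.X * hermiteP n) - Polynomial.derivative (hermiteP n)

/-- The k-th physicists' Hermite polynomial as a function on ℝ. -/
noncomputable def H (k : ℕ) (x : ℝ) : ℝ := (hermiteP k).eval x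

/-- The normalization constants `α k = (2^k · k! · √π)^{-1/2}`. -/
noncomputable def α (k : ℕ) : ℝ :=
  ((2 : ℝ) ^ k * (Nat.factorial k : ℝ) * Real.sqrt π) ^ (-(1 / 2 : ℝ))

/-- The normalized Hermite functions `h k x = α k · H k x · e^{-x²/2}`. -/
noncomputable def h (k : ℕ) (x : ℝ) : ℝ := α k * H k x * Real.exp (-x ^ 2 / 2)

lemma deriv_hermiteP : ∀ n : ℕ,
    Polynomial.derivative (hermiteP (n+1)) = 2*((n:Polynomial ℝ)+1) * hermiteP n := by
  intro n
  induction n with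
  | zero => simp [hermiteP]
  | succ n ih =>
    have h2 : hermiteP (n+2) = 2 * (Polynomial.X * hermiteP (n+1)) - Polynomial.derivative (hermiteP (n+1)) := rfl
    have h1 : hermiteP (n+1) = 2 * (Polynomial.X * hermiteP n) - Polynomial.derivative (hermiteP n) := rfl
    rw [h2]
    simp only [Polynomial.derivative_sub, Polynomial.derivative_mul, Polynomial.derivative_X,
      Polynomial.derivative_ofNat, ih, Polynomial.derivative_natCast, Polynomial.derivative_add,
      Polynomial.derivative_one]
    rw [h1]
    push_cast
    ring

lemma H_zero (x : ℝ) : H 0 x = 1 := by simp [H, hermiteP]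

lemma H_rec (n : ℕ) (x : ℝ) : H (n+1) x = 2*x*H n x - 2*n*H (n-1) x := by
  have h1 : hermiteP (n+1) = 2 * (Polynomial.X * hermiteP n) - Polynomial.derivative (hermiteP n) := rfl
  cases n with
  | zero => simp [H, h1, hermiteP]
  | succ n =>
    rw [H, h1, deriv_hermiteP]
    simp [H]
    ring

lemma mul_H (n : ℕ) (x : ℝ) : x * H n x = 1/2 * H (n+1) x + n * H (n-1) x := by
  rw [H_rec]; ring

lemma main' : ∀ (k : ℕ) (x : ℝ), x ^ k =
    (Nat.factorial k : ℝ) / 2 ^ k *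
      ∑ m ∈ Finset.range (k + 1),
        (if 2*m ≤ k then
          1 / ((Nat.factorial m : ℝ) * (Nat.factorial (k - 2*m) : ℝ)) * H (k - 2*m) x
         else 0) := by
  intro k
  induction k with
  | zero => intro x; simp [H_zero]
  | succ k ih =>
    intro x
    have ffne : ∀ n : ℕ, (Nat.factorial n : ℝ) ≠ 0 := fun n =>
      Nat.cast_ne_zero.mpr (Nat.factorial_ne_zero n)
    set f : ℕ → ℝ := fun m => if 2*m ≤ k then
        1 / ((Nat.factorial m : ℝ) * (Nat.factorial (k - 2*m) : ℝ)) * H (k - 2*m) x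
      else 0 with hf
    set A : ℕ → ℝ := fun m => if 2*m ≤ k then
        1 / ((Nat.factorial m : ℝ) * (Nat.factorial (k - 2*m) : ℝ)) / 2 * H (k+1 - 2*m) x
      else 0 with hA
    set B : ℕ → ℝ := fun m => if 2*m+1 ≤ k then
        1 / ((Nat.factorial m : ℝ) * (Nat.factorial (k - 2*m) : ℝ)) * ((k:ℝ) - 2*m)
          * H (k - 2*m - 1) x
      else 0 with hB
    set B' : ℕ → ℝ := fun m => if 1 ≤ m ∧ 2*m ≤ k+1 then
        1 / ((Nat.factorial (m-1) : ℝ) * (Nat.factorial (k - 2*(m-1)) : ℝ))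
          * ((k:ℝ) - 2*((m:ℝ)-1)) * H (k+1 - 2*m) x
      else 0 with hB'
    have hxf : ∀ m, x * f m = A m + B m := by
      intro m
      simp only [hf, hA, hB]
      by_cases h1 : 2*m ≤ k
      · simp only [if_pos h1]
        have e1 : k - 2*m + 1 = k + 1 - 2*m := by omega
        have hm := mul_H (k - 2*m) x
        rw [e1] at hm
        by_cases h2 : 2*m+1 ≤ k
        · rw [if_pos h2]
          have e2 : ((k - 2*m : ℕ) : ℝ) = (k:ℝ) - 2*m := by push_cast [h1]; ring
          rw [show x * (1 / ((Nat.factorial m : ℝ) * (Nat.factorial (k - 2*m) : ℝ)) * H (k - 2*m) x)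
              = 1 / ((Nat.factorial m : ℝ) * (Nat.factorial (k - 2*m) : ℝ)) * (x * H (k - 2*m) x) by ring,
            hm, e2]
          ring
        · rw [if_neg h2]
          have e3 : k - 2*m = 0 := by omega
          rw [show x * (1 / ((Nat.factorial m : ℝ) * (Nat.factorial (k - 2*m) : ℝ)) * H (k - 2*m) x)
              = 1 / ((Nat.factorial m : ℝ) * (Nat.factorial (k - 2*m) : ℝ)) * (x * H (k - 2*m) x) by ring,
            hm, e3]
          push_cast
          ring
      · simp only [if_neg h1, if_neg (show ¬(2*m+1 ≤ k) by omega)]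
        ring
    have hBB' : ∀ m, B' (m+1) = B m := by
      intro m
      simp only [hB, hB']
      by_cases h2 : 2*m+1 ≤ k
      · rw [if_pos h2, if_pos (show 1 ≤ m+1 ∧ 2*(m+1) ≤ k+1 by omega)]
        have e1 : m + 1 - 1 = m := by omega
        have e2 : k + 1 - 2*(m+1) = k - 2*m - 1 := by omega
        rw [e1, e2]
        push_cast
        ring
      · rw [if_neg h2, if_neg (show ¬(1 ≤ m+1 ∧ 2*(m+1) ≤ k+1) by omega)]
    have hsum : x ^ (k+1) =
        (Nat.factorial k : ℝ) / 2 ^ k * ∑ m ∈ Finset.range (k+2), (A m + B' m) := by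
      have e1 : ∑ m ∈ Finset.range (k+2), A m = ∑ m ∈ Finset.range (k+1), A m := by
        rw [Finset.sum_range_succ]
        have : A (k+1) = 0 := by simp only [hA]; rw [if_neg]; omega
        rw [this, add_zero]
      have e2 : ∑ m ∈ Finset.range (k+2), B' m = ∑ m ∈ Finset.range (k+1), B m := by
        rw [Finset.sum_range_succ']
        simp only [hBB']
        have : B' 0 = 0 := by simp only [hB']; rw [if_neg]; omega
        rw [this, add_zero]
      rw [Finset.sum_add_distrib, e1, e2, ← Finset.sum_add_distrib]
      have : x ^ (k+1) = (Nat.factorial k : ℝ) / 2 ^ k * ∑ m ∈ Finset.range (k+1), (x * f m) := by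
        rw [pow_succ, ih x]
        rw [Finset.mul_sum, Finset.mul_sum, Finset.sum_mul]
        exact Finset.sum_congr rfl fun m _ => by ring
      rw [this]
      congr 1
      exact Finset.sum_congr rfl fun m _ => hxf m
    have hterm : ∀ m ∈ Finset.range (k+2),
        (Nat.factorial (k+1) : ℝ) / 2 ^ (k+1) *
          (if 2*m ≤ k+1 then
            1 / ((Nat.factorial m : ℝ) * (Nat.factorial (k+1 - 2*m) : ℝ)) * H (k+1 - 2*m) x
           else 0)
        = (Nat.factorial k : ℝ) / 2 ^ k * (A m + B' m) := by
      intro m _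
      simp only [hA, hB']
      rcases m with _ | a
      · rw [if_pos (by omega), if_pos (by omega), if_neg (by omega)]
        simp only [Nat.mul_zero, Nat.sub_zero, Nat.factorial_zero, Nat.factorial_succ]
        push_cast
        field_simp
        ring
      · by_cases h1 : 2*(a+1) ≤ k
        · obtain ⟨j, hk⟩ : ∃ j, k = 2*a+2+j := ⟨k - (2*a+2), by omega⟩
          subst hk
          rw [if_pos (by omega), if_pos (by omega), if_pos (by omega)]
          rw [show 2*a+2+j+1 - 2*(a+1) = j+1 by omega,
            show 2*a+2+j - 2*(a+1) = j by omega,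
            show a+1-1 = a by omega,
            show 2*a+2+j - 2*a = j+2 by omega]
          simp only [Nat.factorial_succ]
          push_cast
          have f1 := ffne a
          have f2 := ffne j
          field_simp
          ring
        · by_cases h2 : 2*(a+1) ≤ k+1
          · obtain hk : k = 2*a+1 := by omega
            subst hk
            rw [if_pos (by omega), if_neg (by omega), if_pos (by omega)]
            rw [show 2*a+1+1 - 2*(a+1) = 0 by omega,
              show a+1-1 = a by omega,
              show 2*a+1 - 2*a = 1 by omega]
            simp only [Nat.factorial_succ, Nat.factorial_zero, Nat.factorial_one]
            push_cast
            have f1 := ffne a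
            field_simp
            ring
          · rw [if_neg (by omega), if_neg (by omega), if_neg (by omega)]
            simp
    rw [hsum, Finset.mul_sum, Finset.mul_sum]
    exact (Finset.sum_congr rfl hterm).symm

theorem stmt_7 (k : ℕ) (x : ℝ) :
    x ^ k =
      (Nat.factorial k : ℝ) / 2 ^ k *
        ∑ m ∈ Finset.range (k / 2 + 1),
          1 / ((Nat.factorial m : ℝ) * (Nat.factorial (k - 2 * m) : ℝ)) *
            H (k - 2 * m) x := by
  rw [main' k x]
  congr 1
  rw [← Finset.sum_subset (Finset.range_subset_range.mpr (by omega : k/2+1 ≤ k+1))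
    (fun m _ hm => by
      rw [if_neg]
      rw [Finset.mem_range, not_lt] at hm
      omega)]
  exact Finset.sum_congr rfl fun m hm => by
    rw [if_pos]
    rw [Finset.mem_range] at hm
    omega
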